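/- arXiv:1207.1910 — 2 statements merged into one kernel-verified Lean document; each statement's English description precedes it below -/
import Mathlib

section
/- Let (R, m) be a Noetherian local ring of prime characteristic p > 0, let e ≥ 1, and let ψ : R → R be a p^{-e}-linear map such that ψ(m) is not contained in m. Then there exists a p^{-e}-linear map φ : R → R with φ(1) = 1 (a Frobenius splitting) and φ(m) = R; in particular, m is not compatible with φ. -/
open CategoryTheory IsLocalRing

/-- A `p^{-e}`-linear map on `R`: additive and `φ (r^{p^e} * x) = r * φ x`. -/
def IsPeLinear (p e : ℕ) {R : Type} [CommRing R] (φ : R → R) : Prop :=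
  (∀ x y : R, φ (x + y) = φ x + φ y) ∧ ∀ r x : R, φ (r ^ p ^ e * x) = r * φ x

/-- If some `p^{-e}`-linear map moves the maximal ideal out of itself, then there is a
Frobenius splitting `φ` with `φ (m) = R`; in particular `m` is not compatible with `φ`. -/
theorem exists_splitting_not_compatible_with_maximal_ideal
    {R : Type} [CommRing R] [IsLocalRing R] [IsNoetherianRing R]
    (p : ℕ) [Fact p.Prime] [CharP R p]
    (e : ℕ) (he : 1 ≤ e) (ψ : R → R) (hψ : IsPeLinear p e ψ)
    (hψm : ∃ x ∈ maximalIdeal R, ψ x ∉ maximalIdeal R) :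
    ∃ φ : R → R, IsPeLinear p e φ ∧ φ 1 = 1 ∧
      φ '' (maximalIdeal R : Set R) = Set.univ ∧
      ¬ φ '' (maximalIdeal R : Set R) ⊆ (maximalIdeal R : Set R) := by
  obtain ⟨hadd, hlin⟩ := hψ
  obtain ⟨x, hx, hux⟩ := hψm
  have huIs : IsUnit (ψ x) := by
    by_contra h
    exact hux ((IsLocalRing.mem_maximalIdeal _).mpr h)
  obtain ⟨u, hu⟩ := huIs
  set w : R := (↑u⁻¹ : R) * ψ 1 with hw
  set a : R := (1 - w) ^ p ^ e * x + 1 with ha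
  have ham : a - 1 ∈ maximalIdeal R := by
    simpa [ha] using Ideal.mul_mem_left _ ((1 - w) ^ p ^ e) hx
  have haU : IsUnit a := by
    by_contra h
    have h1 : a ∈ maximalIdeal R := (IsLocalRing.mem_maximalIdeal _).mpr h
    have h2 : (1 : R) ∈ maximalIdeal R := by
      have := Ideal.sub_mem _ h1 ham
      simpa using this
    exact (IsLocalRing.maximalIdeal.isMaximal R).ne_top (Ideal.eq_top_of_isUnit_mem _ h2 isUnit_one)
  obtain ⟨A, hA⟩ := haU
  set φ : R → R := fun y => (↑u⁻¹ : R) * ψ (a * y) with hφ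
  have hφadd : ∀ y z : R, φ (y + z) = φ y + φ z := by
    intro y z
    simp only [hφ, mul_add, hadd]
  have hφlin : ∀ r y : R, φ (r ^ p ^ e * y) = r * φ y := by
    intro r y
    have : a * (r ^ p ^ e * y) = r ^ p ^ e * (a * y) := by ring
    simp only [hφ, this, hlin]
    ring
  have hφ1 : φ 1 = 1 := by
    have hψa : ψ a = (1 - w) * ψ x + ψ 1 := by
      rw [ha, hadd]
      congr 1
      simpa using hlin (1 - w) x
    simp only [hφ, mul_one, hψa]
    rw [mul_add, ← hu, ← hw]
    have huu : (↑u⁻¹ : R) * ↑u = (1 : R) := u.inv_mul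
    have h3 : (↑u⁻¹ : R) * ((1 - w) * ↑u) = 1 - w := by
      rw [← mul_assoc, mul_comm (↑u⁻¹ : R) (1 - w), mul_assoc, huu, mul_one]
    rw [h3, sub_add_cancel]
  have key : ∀ z : R, φ (z ^ p ^ e * ((↑A⁻¹ : R) * x)) = z := by
    intro z
    rw [hφlin]
    have hax : a * ((↑A⁻¹ : R) * x) = x := by
      rw [← mul_assoc, ← hA, A.mul_inv, one_mul]
    simp only [hφ, hax]
    rw [← hu, Units.inv_mul, mul_one]
  have himg : φ '' (maximalIdeal R : Set R) = Set.univ := by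
    ext z
    simp only [Set.mem_univ, iff_true, Set.mem_image]
    exact ⟨z ^ p ^ e * ((↑A⁻¹ : R) * x),
      Ideal.mul_mem_left _ _ (Ideal.mul_mem_left _ _ hx), key z⟩
  refine ⟨φ, ⟨hφadd, hφlin⟩, hφ1, himg, ?_⟩
  intro hsub
  have h1 : (1 : R) ∈ (maximalIdeal R : Set R) := by
    apply hsub
    rw [himg]; trivial
  exact (IsLocalRing.maximalIdeal.isMaximal R).ne_top (Ideal.eq_top_of_isUnit_mem _ h1 isUnit_one)
end

section
/- Let R be a Noetherian commutative ring of prime characteristic p > 0, let e ≥ 1, and let φ : R → R be a surjective p^{-e}-linear map. Let Q ⊂ R be a prime ideal and n ≥ 1. Then φ(Q) ⊆ Q if and only if φ^{∘n}(Q) ⊆ Q, where φ^{∘n} = φ ∘ φ ∘ … ∘ φ denotes the n-fold composite (which is a p^{-ne}-linear map). -/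
open CategoryTheory IsLocalRing

/-- The iterate of a `p^{-e}`-linear map is `p^{-ke}`-linear. -/
lemma iterate_peLinear {p e : ℕ} {R : Type} [CommRing R] {φ : R → R}
    (hφ : IsPeLinear p e φ) (k : ℕ) (r x : R) :
    φ^[k] (r ^ p ^ (e * k) * x) = r * φ^[k] x := by
  induction k generalizing x with
  | zero => simp
  | succ k ih =>
    have h1 : r ^ p ^ (e * (k + 1)) = (r ^ p ^ (e * k)) ^ p ^ e := by
      rw [← pow_mul, ← pow_add, Nat.mul_succ]
    rw [Function.iterate_succ_apply, Function.iterate_succ_apply, h1, hφ.2, ih]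

/-- A prime is compatible with a surjective `p^{-e}`-linear map iff it is compatible with
its `n`-fold composite. -/
theorem compatible_iff_compatible_iterate
    {R : Type} [CommRing R] [IsNoetherianRing R]
    (p : ℕ) [Fact p.Prime] [CharP R p]
    (e : ℕ) (he : 1 ≤ e) (φ : R → R) (hφ : IsPeLinear p e φ)
    (hsurj : Function.Surjective φ)
    (Q : Ideal R) (hQ : Q.IsPrime) (n : ℕ) (hn : 1 ≤ n) :
    (∀ x ∈ Q, φ x ∈ Q) ↔ (∀ x ∈ Q, φ^[n] x ∈ Q) := by
  constructor
  · intro h x hx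
    clear hn
    induction n with
    | zero => simpa using hx
    | succ m ih =>
      rw [Function.iterate_succ_apply']
      exact h _ ih
  · intro h x hx
    -- let y = φ x; we show y ∈ Q using surjectivity of φ^[n-1]
    obtain ⟨m, rfl⟩ : ∃ m, n = m + 1 := ⟨n - 1, (Nat.succ_pred_eq_of_pos hn).symm⟩
    obtain ⟨u, hu⟩ : ∃ u, φ^[m] u = 1 := (hsurj.iterate m) 1
    set y := φ x with hy
    set P := p ^ (e * m) with hP
    have hP1 : 1 ≤ P := Nat.one_le_iff_ne_zero.mpr (pow_ne_zero _ (Fact.out (p := p.Prime)).pos.ne')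
    have key : y = φ^[m + 1] ((y ^ (P - 1) * u) ^ p ^ e * x) := by
      rw [Function.iterate_succ_apply, hφ.2]
      have : y ^ (P - 1) * u * φ x = y ^ P * u := by
        rw [← hy, mul_right_comm, ← pow_succ, Nat.sub_add_cancel hP1]
      rw [this, iterate_peLinear hφ, hu, mul_one]
    rw [key]
    exact h _ (Q.mul_mem_left _ hx)
end
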